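/- Let F = F_{π/2} be the closed-form Appell F₁ representation (with θ = π/2) of the Schwarz–Christoffel integral for the isosceles right triangle. Then, as z → 0 with z ≠ 0 in the open unit disk, F(z) + 1/z tends to −(2^{5/4}/3^{3/4}) · [ 2·F₁(1/2, 1/4, 1/4, 3/2; (2−i√2)/4, (2+i√2)/4) − F₁(3/2, 1/4, 1/4, 5/2; (2+i√2)/4, (2−i√2)/4) ]. Consequently the outer conformal center of the isosceles right triangle T_{π/2} equals λ = κ · (2^{5/4}/3^{3/4}) · [ 2·F₁(1/2, 1/4, 1/4, 3/2; (2−i√2)/4, (2+i√2)/4) − F₁(3/2, 1/4, 1/4, 5/2; (2+i√2)/4, (2−i√2)/4) ], where κ = 3^{3/4}Γ(1/4)²/(2^{7/2}π^{3/2}). -/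

import Mathlib

open Complex

/-- A complex number avoids the closed negative real axis (so the principal
branch power with base `w` behaves well). -/
def OffNegAxis (w : ℂ) : Prop := 0 < w.re ∨ w.im ≠ 0

/-- The Appell hypergeometric function `F₁(a,b,b′,c;x,y)` defined by the Euler
integral, with principal branch complex powers. -/
noncomputable def appellF1 (a b b' c : ℝ) (x y : ℂ) : ℂ :=
  ((Real.Gamma c / (Real.Gamma a * Real.Gamma (c - a)) : ℝ) : ℂ) *
    ∫ s in (0 : ℝ)..1,
      (s : ℂ) ^ ((a : ℂ) - 1) * ((1 : ℂ) - (s : ℂ)) ^ ((c : ℂ) - (a : ℂ) - 1) *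
        (1 - (s : ℂ) * x) ^ (-(b : ℂ)) * (1 - (s : ℂ) * y) ^ (-(b' : ℂ))

/-- `ξ(z) = (√π − i√θ)(z+1)/(2√π)`. -/
noncomputable def xiF (θ : ℝ) (z : ℂ) : ℂ :=
  (((Real.sqrt Real.pi : ℝ) : ℂ) - I * ((Real.sqrt θ : ℝ) : ℂ)) * (z + 1) /
    (2 * ((Real.sqrt Real.pi : ℝ) : ℂ))

/-- `η(z) = (√π + i√θ)(z+1)/(2√π)`. -/
noncomputable def etaF (θ : ℝ) (z : ℂ) : ℂ :=
  (((Real.sqrt Real.pi : ℝ) : ℂ) + I * ((Real.sqrt θ : ℝ) : ℂ)) * (z + 1) /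
    (2 * ((Real.sqrt Real.pi : ℝ) : ℂ))

/-- The common base `(π(z−1)² + θ(z+1)²)/(π+θ)` of `φ` and `ψ`. -/
noncomputable def baseF (θ : ℝ) (z : ℂ) : ℂ :=
  (((Real.pi : ℝ) : ℂ) * (z - 1) ^ 2 + ((θ : ℝ) : ℂ) * (z + 1) ^ 2) / (((Real.pi + θ : ℝ)) : ℂ)

/-- `φ(z) = [(π(z−1)² + θ(z+1)²)/(π+θ)]^{(π+θ)/(2π)}` (principal branch). -/
noncomputable def phiF (θ : ℝ) (z : ℂ) : ℂ :=
  baseF θ z ^ ((((Real.pi + θ) / (2 * Real.pi) : ℝ)) : ℂ)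

/-- `ψ(z) = [(π(z−1)² + θ(z+1)²)/(π+θ)]^{(π−θ)/(2π)}` (principal branch). -/
noncomputable def psiF (θ : ℝ) (z : ℂ) : ℂ :=
  baseF θ z ^ ((((Real.pi - θ) / (2 * Real.pi) : ℝ)) : ℂ)

/-- `δ(z) = [−√π(z−1) − i√θ(z+1)]^{(π−θ)/(2π)} [−√π(z−1) + i√θ(z+1)]^{(π−θ)/(2π)}`. -/
noncomputable def deltaF (θ : ℝ) (z : ℂ) : ℂ :=
  (-((Real.sqrt Real.pi : ℝ) : ℂ) * (z - 1) - I * ((Real.sqrt θ : ℝ) : ℂ) * (z + 1)) ^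
      ((((Real.pi - θ) / (2 * Real.pi) : ℝ)) : ℂ) *
    (-((Real.sqrt Real.pi : ℝ) : ℂ) * (z - 1) + I * ((Real.sqrt θ : ℝ) : ℂ) * (z + 1)) ^
      ((((Real.pi - θ) / (2 * Real.pi) : ℝ)) : ℂ)

/-- The closed-form Appell-`F₁` antiderivative `F_θ` of the Schwarz–Christoffel
integrand for the exterior map of the isosceles triangle `T_θ`. -/
noncomputable def FTheta (θ : ℝ) (z : ℂ) : ℂ :=
  (z + 1) ^ (((1 - θ / Real.pi : ℝ)) : ℂ) *
    (-phiF θ z / z +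
      ((2 : ℂ) ^ (((θ / Real.pi : ℝ)) : ℂ) *
          (((Real.pi : ℝ)) : ℂ) ^ ((((Real.pi + θ) / (2 * Real.pi) : ℝ)) : ℂ) /
          (((2 * Real.pi ^ 2 + Real.pi * θ - θ ^ 2 : ℝ)) : ℂ)) *
        (deltaF θ z / psiF θ z) *
        (-2 * (((2 * Real.pi - θ : ℝ)) : ℂ) *
            appellF1 (1 - θ / Real.pi) ((Real.pi - θ) / (2 * Real.pi))
              ((Real.pi - θ) / (2 * Real.pi)) (2 - θ / Real.pi) (xiF θ z) (etaF θ z) +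
          (((Real.pi + θ : ℝ)) : ℂ) * (z + 1) *
            appellF1 (2 - θ / Real.pi) ((Real.pi - θ) / (2 * Real.pi))
              ((Real.pi - θ) / (2 * Real.pi)) (3 - θ / Real.pi) (etaF θ z) (xiF θ z)))

noncomputable def X0 : ℂ := (2 - I*((Real.sqrt 2:ℝ):ℂ))/4
noncomputable def Y0 : ℂ := (2 + I*((Real.sqrt 2:ℝ):ℂ))/4

lemma sqrt_pi_ne : ((Real.sqrt Real.pi : ℝ):ℂ) ≠ 0 := by
  exact_mod_cast (Real.sqrt_pos.mpr Real.pi_pos).ne'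

lemma pi_half_ne : ((Real.pi + Real.pi/2 : ℝ):ℂ) ≠ 0 := by
  exact_mod_cast (by positivity : (0:ℝ) < Real.pi + Real.pi/2).ne'

lemma xiF_eq (z : ℂ) : xiF (Real.pi/2) z = X0 * (z+1) := by
  have h : (Real.sqrt (Real.pi/2) : ℝ) = Real.sqrt Real.pi / Real.sqrt 2 :=
    Real.sqrt_div Real.pi_pos.le 2
  have h2 : ((Real.sqrt 2:ℝ):ℂ) * ((Real.sqrt 2:ℝ):ℂ) = 2 := by
    norm_cast; exact Real.mul_self_sqrt (by norm_num)
  have hs2 : ((Real.sqrt 2:ℝ):ℂ) ≠ 0 := by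
    exact_mod_cast (Real.sqrt_pos.mpr (by norm_num : (0:ℝ) < 2)).ne'
  unfold xiF X0
  rw [h]
  push_cast
  field_simp [sqrt_pi_ne]
  linear_combination (2*I*(1+z)) * h2

lemma etaF_eq (z : ℂ) : etaF (Real.pi/2) z = Y0 * (z+1) := by
  have h : (Real.sqrt (Real.pi/2) : ℝ) = Real.sqrt Real.pi / Real.sqrt 2 :=
    Real.sqrt_div Real.pi_pos.le 2
  have h2 : ((Real.sqrt 2:ℝ):ℂ) * ((Real.sqrt 2:ℝ):ℂ) = 2 := by
    norm_cast; exact Real.mul_self_sqrt (by norm_num)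
  have hs2 : ((Real.sqrt 2:ℝ):ℂ) ≠ 0 := by
    exact_mod_cast (Real.sqrt_pos.mpr (by norm_num : (0:ℝ) < 2)).ne'
  unfold etaF Y0
  rw [h]
  push_cast
  field_simp [sqrt_pi_ne]
  linear_combination (-2*I*(1+z)) * h2

lemma baseF_zero : baseF (Real.pi/2) 0 = 1 := by
  unfold baseF
  rw [div_eq_one_iff_eq pi_half_ne]
  push_cast
  ring

lemma baseF_deriv : HasDerivAt (baseF (Real.pi/2)) (-2/3) 0 := by
  have hπ : (Real.pi:ℂ) ≠ 0 := by exact_mod_cast Real.pi_ne_zero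
  have h1 : HasDerivAt (fun z : ℂ => (((Real.pi : ℝ) : ℂ) * (z - 1) ^ 2
      + ((Real.pi/2 : ℝ) : ℂ) * (z + 1) ^ 2))
      ((Real.pi:ℂ) * (2*(0-1)) + ((Real.pi/2:ℝ):ℂ) * (2*(0+1))) 0 := by
    have a1 : HasDerivAt (fun z : ℂ => (z - 1)^2) (2*(0-1)) 0 := by
      simpa using (((hasDerivAt_id (0:ℂ)).sub_const 1).fun_pow 2)
    have a2 : HasDerivAt (fun z : ℂ => (z + 1)^2) (2*(0+1)) 0 := by
      simpa using (((hasDerivAt_id (0:ℂ)).add_const 1).fun_pow 2)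
    exact (a1.const_mul _).add (a2.const_mul _)
  have := h1.div_const (((Real.pi + Real.pi/2 : ℝ)):ℂ)
  convert this using 1
  · rfl
  · rfl
  · rfl
  rw [eq_div_iff pi_half_ne]
  push_cast
  ring


noncomputable def A1f (z : ℂ) : ℂ :=
  appellF1 (1/2) (1/4) (1/4) (3/2) (xiF (Real.pi/2) z) (etaF (Real.pi/2) z)
noncomputable def A2f (z : ℂ) : ℂ :=
  appellF1 (3/2) (1/4) (1/4) (5/2) (etaF (Real.pi/2) z) (xiF (Real.pi/2) z)
noncomputable def Kc : ℂ := (((2:ℝ)):ℂ)^((((1/2:ℝ))):ℂ) * ((Real.pi:ℝ):ℂ)^((((3/4:ℝ))):ℂ) / ((9/4:ℂ) * ((Real.pi:ℝ):ℂ)^2)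

lemma FTheta_eq (z : ℂ) :
    FTheta (Real.pi/2) z = (z+1)^((1:ℂ)/2) *
      (-((baseF (Real.pi/2) z)^((3:ℂ)/4))/z
        + Kc * (deltaF (Real.pi/2) z / (baseF (Real.pi/2) z)^((1:ℂ)/4)) *
          (-(3*((Real.pi:ℝ):ℂ)) * A1f z + (3*((Real.pi:ℝ):ℂ)/2) * (z+1) * A2f z)) := by
  have hπ : Real.pi ≠ 0 := Real.pi_ne_zero
  have r1 : (1 - (Real.pi/2)/Real.pi : ℝ) = 1/2 := by field_simp; ring
  have r2 : ((Real.pi + Real.pi/2)/(2*Real.pi) : ℝ) = 3/4 := by field_simp; ring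
  have r3 : ((Real.pi - Real.pi/2)/(2*Real.pi) : ℝ) = 1/4 := by field_simp; ring
  have r4 : ((Real.pi/2)/Real.pi : ℝ) = 1/2 := by field_simp
  have r5 : (2 - (Real.pi/2)/Real.pi : ℝ) = 3/2 := by field_simp; ring
  have r6 : (3 - (Real.pi/2)/Real.pi : ℝ) = 5/2 := by field_simp; ring
  have c1 : ((2*Real.pi - Real.pi/2 : ℝ):ℂ) = 3*((Real.pi:ℝ):ℂ)/2 := by push_cast; ring
  have c2 : ((Real.pi + Real.pi/2 : ℝ):ℂ) = 3*((Real.pi:ℝ):ℂ)/2 := by push_cast; ring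
  have c3 : ((2*Real.pi^2 + Real.pi*(Real.pi/2) - (Real.pi/2)^2 : ℝ):ℂ)
      = (9/4:ℂ) * ((Real.pi:ℝ):ℂ)^2 := by push_cast; ring
  have e2 : (2:ℂ)^(((Real.pi/2/Real.pi : ℝ)):ℂ) = (((2:ℝ)):ℂ)^((((1/2:ℝ))):ℂ) := by rw [r4]; norm_num
  unfold FTheta phiF psiF A1f A2f Kc
  rw [r1, r2, r3, r5, r6, c1, c2, c3, e2]
  push_cast
  ring

noncomputable def hF (z : ℂ) : ℂ := (z+1)^((1:ℂ)/2) * (baseF (Real.pi/2) z)^((3:ℂ)/4)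

lemma hF_zero : hF 0 = 1 := by
  unfold hF
  rw [baseF_zero]
  norm_num

lemma hF_deriv : HasDerivAt hF 0 0 := by
  have d1 : HasDerivAt (fun z : ℂ => z + 1) 1 0 := (hasDerivAt_id 0).add_const 1
  have c1 : HasDerivAt (fun z : ℂ => (z+1)^((1:ℂ)/2))
      ((1:ℂ)/2 * ((0:ℂ)+1)^((1:ℂ)/2 - 1) * 1) 0 :=
    d1.cpow_const (by norm_num [Complex.mem_slitPlane_iff])
  have c2 : HasDerivAt (fun z : ℂ => (baseF (Real.pi/2) z)^((3:ℂ)/4))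
      ((3:ℂ)/4 * (baseF (Real.pi/2) 0)^((3:ℂ)/4 - 1) * (-2/3)) 0 :=
    baseF_deriv.cpow_const (by rw [baseF_zero]; norm_num [Complex.mem_slitPlane_iff])
  have := c1.mul c2
  convert this using 1
  · rfl
  · rfl
  · rfl
  rw [baseF_zero]
  norm_num

lemma slope_lim :
    Filter.Tendsto (fun z : ℂ => (1 - hF z)/z) (nhdsWithin 0 (Metric.ball (0:ℂ) 1 \ {0}))
      (nhds 0) := by
  have h := hasDerivAt_iff_tendsto_slope.mp hF_deriv
  have h2 : Filter.Tendsto (fun z : ℂ => (1 - hF z)/z) (nhdsWithin 0 {(0:ℂ)}ᶜ) (nhds 0) := by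
    have := h.neg
    rw [neg_zero] at this
    refine this.congr (fun z => ?_)
    rw [slope_def_field, hF_zero]
    ring
  exact h2.mono_left (nhdsWithin_mono _ (fun z hz => hz.2))

lemma cont_aux (a : ℝ) (ha : 0 < a) (u v : ℂ → ℂ) (hu : Continuous u) (hv : Continuous v)
    (hb : ∀ᶠ z in nhds (0:ℂ), ∀ s ∈ Set.Icc (0:ℝ) 1,
        (1:ℝ)/100 ≤ (1 - (s:ℂ) * u z).re ∧ (1:ℝ)/100 ≤ (1 - (s:ℂ) * v z).re) :
    ContinuousAt (fun z : ℂ => ∫ s in (0:ℝ)..1,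
      (s : ℂ) ^ ((a : ℂ) - 1) * (1 - (s:ℂ) * u z) ^ (-(((1/4 : ℝ)):ℂ))
        * (1 - (s:ℂ) * v z) ^ (-(((1/4 : ℝ)):ℂ))) 0 := by
  have hΙ : Set.uIoc (0:ℝ) 1 = Set.Ioc (0:ℝ) 1 := Set.uIoc_of_le (by norm_num)
  set M : ℝ := ((1:ℝ)/100) ^ (-(1/4 : ℝ)) with hM
  have hM0 : 0 ≤ M := Real.rpow_nonneg (by norm_num) _
  have key : ∀ (w : ℂ), (1:ℝ)/100 ≤ (1 - w).re →
      ‖(1 - w) ^ (-(((1/4 : ℝ)):ℂ))‖ ≤ M := by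
    intro w hw
    have h1 : (1:ℝ)/100 ≤ ‖1 - w‖ := hw.trans (Complex.re_le_norm _)
    have : ‖(1 - w) ^ (-(((1/4 : ℝ)):ℂ))‖ = ‖1 - w‖ ^ (-(1/4 : ℝ)) := by
      rw [show (-(((1/4 : ℝ)):ℂ)) = (((-(1/4 : ℝ)):ℝ):ℂ) by push_cast; ring]
      exact Complex.norm_cpow_real _ _
    rw [this, hM]
    exact Real.rpow_le_rpow_of_nonpos (by norm_num) h1 (by norm_num)
  have contbase : ∀ (w : ℂ → ℂ), Continuous w → ∀ s : ℝ,
      Continuous (fun z : ℂ => 1 - (s:ℂ) * w z) := by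
    intro w hw s; exact continuous_const.sub (continuous_const.mul hw)
  apply intervalIntegral.continuousAt_of_dominated_interval
    (bound := fun s => s ^ (a - 1) * M * M)
  · -- measurability
    filter_upwards [hb] with z hz
    apply ContinuousOn.aestronglyMeasurable _ measurableSet_uIoc
    rw [hΙ]
    intro s hs
    have hs0 : (0:ℝ) < s := hs.1
    have hsIcc : s ∈ Set.Icc (0:ℝ) 1 := ⟨hs.1.le, hs.2⟩
    apply ContinuousAt.continuousWithinAt
    have c1 : ContinuousAt (fun t : ℝ => ((t:ℂ)) ^ ((a:ℂ) - 1)) s :=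
      (Complex.continuous_ofReal.continuousAt).cpow continuousAt_const
        (by simp [Complex.mem_slitPlane_iff, hs0])
    have c2 : ContinuousAt (fun t : ℝ => (1 - (t:ℂ) * u z) ^ (-(((1/4 : ℝ)):ℂ))) s := by
      apply ContinuousAt.cpow _ continuousAt_const
      · rw [Complex.mem_slitPlane_iff]
        exact Or.inl (lt_of_lt_of_le (by norm_num) (hz s hsIcc).1)
      · exact (continuous_const.sub ((Complex.continuous_ofReal.mul continuous_const))).continuousAt
    have c3 : ContinuousAt (fun t : ℝ => (1 - (t:ℂ) * v z) ^ (-(((1/4 : ℝ)):ℂ))) s := by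
      apply ContinuousAt.cpow _ continuousAt_const
      · rw [Complex.mem_slitPlane_iff]
        exact Or.inl (lt_of_lt_of_le (by norm_num) (hz s hsIcc).2)
      · exact (continuous_const.sub ((Complex.continuous_ofReal.mul continuous_const))).continuousAt
    exact (c1.mul c2).mul c3
  · -- bound
    filter_upwards [hb] with z hz
    apply Filter.Eventually.of_forall
    intro s hs
    rw [hΙ] at hs
    have hs0 : (0:ℝ) < s := hs.1
    have hsIcc : s ∈ Set.Icc (0:ℝ) 1 := ⟨hs.1.le, hs.2⟩
    have e1 : ‖(s : ℂ) ^ ((a : ℂ) - 1)‖ = s ^ (a - 1) := by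
      rw [show ((a:ℂ) - 1) = (((a - 1 : ℝ)):ℂ) by push_cast; ring]
      rw [Complex.norm_cpow_eq_rpow_re_of_pos hs0, Complex.ofReal_re]
    have t1 := key _ (hz s hsIcc).1
    have t2 := key _ (hz s hsIcc).2
    calc ‖(s : ℂ) ^ ((a : ℂ) - 1) * (1 - (s:ℂ) * u z) ^ (-(((1/4 : ℝ)):ℂ))
          * (1 - (s:ℂ) * v z) ^ (-(((1/4 : ℝ)):ℂ))‖
        = s ^ (a-1) * ‖(1 - (s:ℂ) * u z) ^ (-(((1/4 : ℝ)):ℂ))‖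
          * ‖(1 - (s:ℂ) * v z) ^ (-(((1/4 : ℝ)):ℂ))‖ := by
          rw [norm_mul, norm_mul, e1]
      _ ≤ s ^ (a-1) * M * M := by
          have h0 : (0:ℝ) ≤ s ^ (a-1) := Real.rpow_nonneg hs0.le _
          gcongr
  · -- integrability of bound
    exact ((intervalIntegral.intervalIntegrable_rpow' (by linarith)).mul_const M).mul_const M
  · -- continuity in z
    apply Filter.Eventually.of_forall
    intro s hs
    rw [hΙ] at hs
    have hsIcc : s ∈ Set.Icc (0:ℝ) 1 := ⟨hs.1.le, hs.2⟩
    have hz0 := hb.self_of_nhds s hsIcc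
    apply ContinuousAt.mul
    apply ContinuousAt.mul continuousAt_const
    · exact ContinuousAt.cpow ((contbase u hu s).continuousAt) continuousAt_const
        (by rw [Complex.mem_slitPlane_iff]; exact Or.inl (lt_of_lt_of_le (by norm_num) hz0.1))
    · exact ContinuousAt.cpow ((contbase v hv s).continuousAt) continuousAt_const
        (by rw [Complex.mem_slitPlane_iff]; exact Or.inl (lt_of_lt_of_le (by norm_num) hz0.2))

lemma sqrt2_le : Real.sqrt 2 ≤ 3/2 := by
  nlinarith [Real.sq_sqrt (by norm_num : (0:ℝ) ≤ 2), Real.sqrt_nonneg 2]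

lemma absX0 : ‖X0‖ ≤ 7/8 := by
  unfold X0
  rw [norm_div]
  have h1 : ‖(2:ℂ) - I*((Real.sqrt 2:ℝ):ℂ)‖ ≤ 2 + Real.sqrt 2 := by
    calc ‖(2:ℂ) - I*((Real.sqrt 2:ℝ):ℂ)‖
        ≤ ‖(2:ℂ)‖ + ‖I*((Real.sqrt 2:ℝ):ℂ)‖ := norm_sub_le _ _
      _ = 2 + Real.sqrt 2 := by
          simp [map_mul, Complex.norm_real, _root_.abs_of_nonneg (Real.sqrt_nonneg 2)]
  have h2 : ‖(4:ℂ)‖ = 4 := by norm_num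
  rw [h2]
  nlinarith [sqrt2_le]

lemma absY0 : ‖Y0‖ ≤ 7/8 := by
  unfold Y0
  rw [norm_div]
  have h1 : ‖(2:ℂ) + I*((Real.sqrt 2:ℝ):ℂ)‖ ≤ 2 + Real.sqrt 2 := by
    calc ‖(2:ℂ) + I*((Real.sqrt 2:ℝ):ℂ)‖
        ≤ ‖(2:ℂ)‖ + ‖I*((Real.sqrt 2:ℝ):ℂ)‖ := norm_add_le _ _
      _ = 2 + Real.sqrt 2 := by
          simp [map_mul, Complex.norm_real, _root_.abs_of_nonneg (Real.sqrt_nonneg 2)]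
  have h2 : ‖(4:ℂ)‖ = 4 := by norm_num
  rw [h2]
  nlinarith [sqrt2_le]

lemma re_bound (w : ℂ) (hw : ‖w‖ ≤ 7/8) (z : ℂ) (hz : ‖z‖ ≤ 1/10)
    (s : ℝ) (hs : s ∈ Set.Icc (0:ℝ) 1) :
    (1:ℝ)/100 ≤ (1 - (s:ℂ) * (w * (z+1))).re := by
  have h1 : ((s:ℂ) * (w * (z+1))).re ≤ ‖(s:ℂ) * (w * (z+1))‖ :=
    Complex.re_le_norm _
  have h2 : ‖(s:ℂ) * (w * (z+1))‖ = s * (‖w‖ * ‖z+1‖) := by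
    rw [norm_mul, norm_mul, Complex.norm_real, Real.norm_eq_abs, _root_.abs_of_nonneg hs.1]
  have h3 : ‖z+1‖ ≤ 11/10 := by
    calc ‖z+1‖ ≤ ‖z‖ + ‖(1:ℂ)‖ := norm_add_le _ _
      _ ≤ 11/10 := by rw [norm_one]; linarith
  have h4 : s * (‖w‖ * ‖z+1‖) ≤ 1 * ((7/8) * (11/10)) := by
    have := norm_nonneg w
    have := norm_nonneg (z+1)
    gcongr
    exact hs.2
  have h5 : (1 - (s:ℂ) * (w * (z+1))).re = 1 - ((s:ℂ) * (w * (z+1))).re := by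
    simp [Complex.sub_re]
  rw [h5]
  linarith

lemma hb_event : ∀ᶠ z in nhds (0:ℂ), ∀ s ∈ Set.Icc (0:ℝ) 1,
    (1:ℝ)/100 ≤ (1 - (s:ℂ) * xiF (Real.pi/2) z).re ∧
    (1:ℝ)/100 ≤ (1 - (s:ℂ) * etaF (Real.pi/2) z).re := by
  filter_upwards [Metric.closedBall_mem_nhds (0:ℂ) (by norm_num : (0:ℝ) < 1/10)] with z hz s hs
  rw [Metric.mem_closedBall, dist_zero_right] at hz
  have hz' : ‖z‖ ≤ 1/10 := hz
  constructor
  · rw [xiF_eq]; exact re_bound X0 absX0 z hz' s hs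
  · rw [etaF_eq]; exact re_bound Y0 absY0 z hz' s hs

lemma xiF_cont : Continuous (xiF (Real.pi/2)) := by
  have : xiF (Real.pi/2) = fun z => X0 * (z+1) := funext xiF_eq
  rw [this]
  exact continuous_const.mul (continuous_id.add continuous_const)

lemma etaF_cont : Continuous (etaF (Real.pi/2)) := by
  have : etaF (Real.pi/2) = fun z => Y0 * (z+1) := funext etaF_eq
  rw [this]
  exact continuous_const.mul (continuous_id.add continuous_const)

lemma A1f_cont : ContinuousAt A1f 0 := by
  unfold A1f appellF1
  simp only [show (((3/2:ℝ)):ℂ) - (((1/2:ℝ)):ℂ) - 1 = 0 by norm_num, Complex.cpow_zero, mul_one]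
  exact continuousAt_const.mul
    (cont_aux (1/2) (by norm_num) (xiF (Real.pi/2)) (etaF (Real.pi/2)) xiF_cont etaF_cont hb_event)

lemma A2f_cont : ContinuousAt A2f 0 := by
  unfold A2f appellF1
  simp only [show (((5/2:ℝ)):ℂ) - (((3/2:ℝ)):ℂ) - 1 = 0 by norm_num, Complex.cpow_zero, mul_one]
  refine continuousAt_const.mul
    (cont_aux (3/2) (by norm_num) (etaF (Real.pi/2)) (xiF (Real.pi/2)) etaF_cont xiF_cont ?_)
  filter_upwards [hb_event] with z hz s hs
  exact ⟨(hz s hs).2, (hz s hs).1⟩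

lemma sqrt_pi_pos : (0:ℝ) < Real.sqrt Real.pi := Real.sqrt_pos.mpr Real.pi_pos

lemma deltaF_cont : ContinuousAt (deltaF (Real.pi/2)) 0 := by
  unfold deltaF
  apply ContinuousAt.mul
  · apply ContinuousAt.cpow _ continuousAt_const
    · rw [Complex.mem_slitPlane_iff]
      left
      simp [sqrt_pi_pos, Real.pi_pos]
    · fun_prop
  · apply ContinuousAt.cpow _ continuousAt_const
    · rw [Complex.mem_slitPlane_iff]
      left
      simp [sqrt_pi_pos, Real.pi_pos]
    · fun_prop

lemma deltaF_zero :
    deltaF (Real.pi/2) 0 = ((Real.sqrt (3*Real.pi/2) ^ ((1/2):ℝ) : ℝ) : ℂ) := by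
  have r3 : ((Real.pi - Real.pi/2)/(2*Real.pi) : ℝ) = 1/4 := by
    field_simp; ring
  set w : ℂ := ((Real.sqrt Real.pi : ℝ):ℂ) + I * ((Real.sqrt (Real.pi/2) : ℝ):ℂ) with hw
  have hwre : w.re = Real.sqrt Real.pi := by simp [hw]
  have hwim : w.im = Real.sqrt (Real.pi/2) := by simp [hw]
  have hw_ne : w ≠ 0 := by
    intro h
    rw [Complex.ext_iff] at h
    rw [hwre] at h
    exact sqrt_pi_pos.ne' (by simpa using h.1)
  have harg : w.arg ≠ Real.pi := by
    intro h
    rw [Complex.arg_eq_pi_iff] at h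
    rw [hwre] at h
    linarith [sqrt_pi_pos, h.1]
  have hconj : (starRingEnd ℂ) w = ((Real.sqrt Real.pi : ℝ):ℂ) - I * ((Real.sqrt (Real.pi/2) : ℝ):ℂ) := by
    rw [hw]
    simp [Complex.ext_iff]
  have habs : ‖w‖ = Real.sqrt (3*Real.pi/2) := by
    rw [Complex.norm_def, Complex.normSq_apply, hwre, hwim,
      Real.mul_self_sqrt Real.pi_pos.le, Real.mul_self_sqrt (by positivity : (0:ℝ) ≤ Real.pi/2)]
    congr 1
    ring
  have habs_pos : 0 < ‖w‖ := norm_pos_iff.mpr hw_ne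
  have hconj_ne : (starRingEnd ℂ) w ≠ 0 := by simpa using hw_ne
  unfold deltaF
  rw [r3]
  have e1 : (-((Real.sqrt Real.pi : ℝ):ℂ) * ((0:ℂ) - 1) - I * ((Real.sqrt (Real.pi/2) : ℝ):ℂ) * ((0:ℂ) + 1))
      = (starRingEnd ℂ) w := by rw [hconj]; ring
  have e2 : (-((Real.sqrt Real.pi : ℝ):ℂ) * ((0:ℂ) - 1) + I * ((Real.sqrt (Real.pi/2) : ℝ):ℂ) * ((0:ℂ) + 1))
      = w := by rw [hw]; ring
  rw [e1, e2]
  rw [Complex.cpow_def_of_ne_zero hconj_ne, Complex.cpow_def_of_ne_zero hw_ne,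
    ← Complex.exp_add, Complex.log_conj _ harg]
  have e3 : (starRingEnd ℂ) (Complex.log w) * (((1/4:ℝ)):ℂ) + Complex.log w * (((1/4:ℝ)):ℂ)
      = ((2 * Real.log ‖w‖ : ℝ) : ℂ) * (((1/4:ℝ)):ℂ) := by
    rw [← add_mul]
    congr 1
    rw [add_comm, Complex.add_conj, Complex.log_re]
  rw [e3]
  rw [show ((2 * Real.log ‖w‖ : ℝ) : ℂ) * (((1/4:ℝ)):ℂ)
      = ((Real.log ‖w‖ * (1/2) : ℝ) : ℂ) by push_cast; ring]
  rw [← Complex.ofReal_exp, ← Real.rpow_def_of_pos habs_pos, habs]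

lemma real_const_id :
    (2:ℝ)^((1/2:ℝ)) * Real.pi^((3/4:ℝ)) / ((9/4)*Real.pi^2)
      * (Real.sqrt (3*Real.pi/2))^((1/2:ℝ)) * (3*Real.pi/2)
    = (2:ℝ)^((5:ℝ)/4) / (3:ℝ)^((3:ℝ)/4) := by
  have hp : (0:ℝ) < Real.pi := Real.pi_pos
  have h32 : (0:ℝ) < 3*Real.pi/2 := by positivity
  have hL : (0:ℝ) < (2:ℝ)^((1/2:ℝ)) * Real.pi^((3/4:ℝ)) / ((9/4)*Real.pi^2)
      * (Real.sqrt (3*Real.pi/2))^((1/2:ℝ)) * (3*Real.pi/2) := by positivity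
  have hR : (0:ℝ) < (2:ℝ)^((5:ℝ)/4) / (3:ℝ)^((3:ℝ)/4) := by positivity
  apply Real.log_injOn_pos (Set.mem_Ioi.mpr hL) (Set.mem_Ioi.mpr hR)
  rw [Real.log_mul (by positivity) (by positivity),
      Real.log_mul (by positivity) (by positivity),
      Real.log_div (by positivity) (by positivity),
      Real.log_mul (by positivity) (by positivity),
      Real.log_mul (by positivity) (by positivity),
      Real.log_div (by positivity) (by positivity),
      Real.log_div (by positivity) (by positivity),
      Real.log_mul (by positivity) (by positivity),
      Real.log_rpow (by norm_num), Real.log_rpow hp,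
      Real.log_rpow (Real.sqrt_pos.mpr h32), Real.log_sqrt h32.le,
      Real.log_div (by positivity) (by positivity),
      Real.log_mul (by positivity) (by positivity),
      Real.log_pow,
      show (9:ℝ) = 3^2 by norm_num, show (4:ℝ) = 2^2 by norm_num,
      Real.log_pow, Real.log_pow,
      Real.log_div (by positivity) (by positivity),
      Real.log_rpow (by norm_num : (0:ℝ) < 2),
      Real.log_rpow (by norm_num : (0:ℝ) < 3)]
  push_cast
  ring

lemma const_id :
    Kc * ((Real.sqrt (3*Real.pi/2) ^ ((1/2):ℝ) : ℝ) : ℂ) * (3*((Real.pi:ℝ):ℂ)/2)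
      = (((2:ℝ)^((5:ℝ)/4)/(3:ℝ)^((3:ℝ)/4) : ℝ) : ℂ) := by
  unfold Kc
  rw [← Complex.ofReal_cpow (by norm_num : (0:ℝ) ≤ 2),
      ← Complex.ofReal_cpow Real.pi_pos.le,
      ← real_const_id]
  push_cast
  ring

noncomputable def gF (z : ℂ) : ℂ :=
  (z+1)^((1:ℂ)/2) *
    (Kc * (deltaF (Real.pi/2) z / (baseF (Real.pi/2) z)^((1:ℂ)/4)) *
      (-(3*((Real.pi:ℝ):ℂ)) * A1f z + (3*((Real.pi:ℝ):ℂ)/2) * (z+1) * A2f z))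

lemma baseF_cont : Continuous (baseF (Real.pi/2)) := by
  unfold baseF
  exact ((continuous_const.mul ((continuous_id.sub continuous_const).pow 2)).add
    (continuous_const.mul ((continuous_id.add continuous_const).pow 2))).div_const _

lemma gF_cont : ContinuousAt gF 0 := by
  unfold gF
  have t1 : ContinuousAt (fun z : ℂ => (z+1)^((1:ℂ)/2)) 0 :=
    ContinuousAt.cpow (by fun_prop) continuousAt_const
      (by norm_num [Complex.mem_slitPlane_iff])
  have t2 : ContinuousAt (fun z : ℂ => (baseF (Real.pi/2) z)^((1:ℂ)/4)) 0 :=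
    ContinuousAt.cpow baseF_cont.continuousAt continuousAt_const
      (by rw [baseF_zero]; norm_num [Complex.mem_slitPlane_iff])
  have t3 : ContinuousAt (fun z : ℂ => deltaF (Real.pi/2) z / (baseF (Real.pi/2) z)^((1:ℂ)/4)) 0 :=
    deltaF_cont.div t2 (by rw [baseF_zero]; norm_num)
  exact t1.mul ((continuousAt_const.mul t3).mul
    ((continuousAt_const.mul A1f_cont).add
      ((continuousAt_const.mul (continuousAt_id.add continuousAt_const)).mul A2f_cont)))

lemma xiF_zero : xiF (Real.pi/2) 0 = X0 := by rw [xiF_eq]; ring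
lemma etaF_zero : etaF (Real.pi/2) 0 = Y0 := by rw [etaF_eq]; ring

lemma gF_zero :
    gF 0 = -(((2:ℝ)^((5:ℝ)/4)/(3:ℝ)^((3:ℝ)/4) : ℝ) : ℂ) *
      (2 * appellF1 (1/2) (1/4) (1/4) (3/2) X0 Y0
        - appellF1 (3/2) (1/4) (1/4) (5/2) Y0 X0) := by
  unfold gF
  rw [deltaF_zero, baseF_zero]
  unfold A1f A2f
  rw [xiF_zero, etaF_zero]
  rw [show ((0:ℂ)+1) = 1 by ring, Complex.one_cpow, Complex.one_cpow]
  set A1v := appellF1 (1/2) (1/4) (1/4) (3/2) X0 Y0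
  set A2v := appellF1 (3/2) (1/4) (1/4) (5/2) Y0 X0
  have h := const_id
  linear_combination (-(2*A1v) + A2v) * h

/-- for `θ = π/2`, `F_{π/2}(z) + 1/z` tends, as `z → 0` in the
punctured open unit disk, to
`−(2^{5/4}/3^{3/4})·[2F₁(1/2,1/4,1/4,3/2;(2−i√2)/4,(2+i√2)/4)
  − F₁(3/2,1/4,1/4,5/2;(2+i√2)/4,(2−i√2)/4)]`;
consequently the outer conformal center of the isosceles right triangle is
`λ = κ·(2^{5/4}/3^{3/4})·[2F₁(…) − F₁(…)]`, where
`κ = 3^{3/4}Γ(1/4)²/(2^{7/2}π^{3/2})` is its outer radius (so `λ` is `−κ`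
times the above limit). -/
theorem stmt_14 :
    let bracket : ℂ :=
      2 * appellF1 (1 / 2) (1 / 4) (1 / 4) (3 / 2)
            ((2 - I * ((Real.sqrt 2 : ℝ) : ℂ)) / 4) ((2 + I * ((Real.sqrt 2 : ℝ) : ℂ)) / 4) -
        appellF1 (3 / 2) (1 / 4) (1 / 4) (5 / 2)
            ((2 + I * ((Real.sqrt 2 : ℝ) : ℂ)) / 4) ((2 - I * ((Real.sqrt 2 : ℝ) : ℂ)) / 4)
    let L : ℂ := -(((2 : ℝ) ^ ((5 : ℝ) / 4) / (3 : ℝ) ^ ((3 : ℝ) / 4) : ℝ) : ℂ) * bracket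
    let κ : ℝ := (3 : ℝ) ^ ((3 : ℝ) / 4) * Real.Gamma (1 / 4) ^ 2 /
      ((2 : ℝ) ^ ((7 : ℝ) / 2) * Real.pi ^ ((3 : ℝ) / 2))
    Filter.Tendsto (fun z : ℂ => FTheta (Real.pi / 2) z + 1 / z)
        (nhdsWithin 0 (Metric.ball (0 : ℂ) 1 \ {0})) (nhds L) ∧
      ((κ : ℝ) : ℂ) * (((2 : ℝ) ^ ((5 : ℝ) / 4) / (3 : ℝ) ^ ((3 : ℝ) / 4) : ℝ) : ℂ) * bracket =
        -(((κ : ℝ) : ℂ)) * L := by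
  intro bracket L κ
  have hL : L = -(((2:ℝ)^((5:ℝ)/4)/(3:ℝ)^((3:ℝ)/4) : ℝ) : ℂ) *
      (2 * appellF1 (1/2) (1/4) (1/4) (3/2) X0 Y0
        - appellF1 (3/2) (1/4) (1/4) (5/2) Y0 X0) := rfl
  constructor
  · -- the limit
    have heq : ∀ᶠ z in nhdsWithin (0:ℂ) (Metric.ball (0:ℂ) 1 \ {0}),
        (1 - hF z)/z + gF z = FTheta (Real.pi/2) z + 1/z := by
      filter_upwards [self_mem_nhdsWithin] with z hz
      have hz0 : z ≠ 0 := hz.2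
      rw [FTheta_eq]
      unfold hF gF
      field_simp
      ring
    have T2 : Filter.Tendsto gF (nhdsWithin 0 (Metric.ball (0:ℂ) 1 \ {0})) (nhds (gF 0)) :=
      gF_cont.tendsto.mono_left nhdsWithin_le_nhds
    have T := slope_lim.add T2
    rw [zero_add] at T
    have hgL : gF 0 = L := by rw [gF_zero, hL]
    rw [hgL] at T
    exact T.congr' heq
  · have hL2 : L = -(((2:ℝ)^((5:ℝ)/4)/(3:ℝ)^((3:ℝ)/4) : ℝ) : ℂ) * bracket := rfl
    rw [hL2]
    ring
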